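/- For every real constant C > 0 there exists a finite tree T with domination number γ = γ(T) ≥ 2 such that Γ(T) > C·γ·2^γ / ln γ. (In particular, the conjecture of Alvarado, Dantas, Mohr and Rautenbach that Γ(T) = O(γ 2^γ / ln γ) for trees is false.) -/

import Mathlib

/-- A set `D` of vertices is a dominating set if every vertex either lies in `D`
or is adjacent to a vertex of `D`. -/
def IsDominatingSet {V : Type*} (G : SimpleGraph V) (D : Finset V) : Prop :=
  ∀ v : V, v ∈ D ∨ ∃ w ∈ D, G.Adj v w

/-- The domination number: the minimum size of a dominating set. -/
noncomputable def dominationNumber {V : Type*} [Fintype V] (G : SimpleGraph V) : ℕ :=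
  sInf {n | ∃ D : Finset V, IsDominatingSet G D ∧ D.card = n}

/-- The number of minimum dominating sets. -/
noncomputable def numMinDomSets {V : Type*} [Fintype V] (G : SimpleGraph V) : ℕ :=
  Set.ncard {D : Finset V | IsDominatingSet G D ∧ D.card = dominationNumber G}


section Generic

open SimpleGraph Walk

variable {V : Type} (root : V) (parent : V → V) (rank : V → ℕ)

def parentGraph : SimpleGraph V :=
  SimpleGraph.fromRel (fun u v => v ≠ root ∧ u = parent v)

lemma parentGraph_adj {u v : V} :
    (parentGraph root parent).Adj u v ↔
      u ≠ v ∧ ((v ≠ root ∧ u = parent v) ∨ (u ≠ root ∧ v = parent u)) := by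
  simp [parentGraph, SimpleGraph.fromRel_adj]

variable (hrank : ∀ v, v ≠ root → rank (parent v) < rank v)

include hrank

lemma parentGraph_reach (v : V) : (parentGraph root parent).Reachable v root := by
  suffices H : ∀ n, ∀ v : V, rank v ≤ n → (parentGraph root parent).Reachable v root by
    exact H (rank v) v le_rfl
  intro n
  induction n with
  | zero =>
    intro v hv
    by_cases h : v = root
    · exact h ▸ Reachable.refl _
    · exact absurd (hrank v h) (by omega)
  | succ n ih =>
    intro v hv
    by_cases h : v = root
    · exact h ▸ Reachable.refl _
    · have hlt := hrank v h
      have hadj : (parentGraph root parent).Adj v (parent v) := by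
        rw [parentGraph_adj]
        exact ⟨fun heq => by rw [← heq] at hlt; omega, Or.inr ⟨h, rfl⟩⟩
      exact hadj.reachable.trans (ih (parent v) (by omega))

lemma parentGraph_key {u x : V} (hx : (parentGraph root parent).Adj u x)
    (hrx : rank x ≤ rank u) : x = parent u := by
  rw [parentGraph_adj] at hx
  rcases hx.2 with ⟨h1, h2⟩ | ⟨h1, h2⟩
  · have := hrank x h1
    rw [← h2] at this
    omega
  · exact h2

lemma parentGraph_acyclic : (parentGraph root parent).IsAcyclic := by
  classical
  intro v c hc
  have hne : c.support.toFinset.Nonempty := ⟨v, by simp⟩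
  obtain ⟨u, hu, hmax⟩ := c.support.toFinset.exists_max_image rank hne
  rw [List.mem_toFinset] at hu
  have hmax' : ∀ w ∈ c.support, rank w ≤ rank u := fun w hw =>
    hmax w (List.mem_toFinset.mpr hw)
  obtain ⟨c', hc', hsup⟩ : ∃ c' : (parentGraph root parent).Walk u u,
      c'.IsCycle ∧ ∀ w ∈ c'.support, rank w ≤ rank u := by
    refine ⟨c.rotate u hu, hc.rotate hu, ?_⟩
    intro w hw
    rw [Walk.support_eq_cons] at hw
    rcases List.mem_cons.mp hw with h | h
    · exact h ▸ le_rfl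
    · have hrot := Walk.support_rotate c u hu
      have : w ∈ c.support.tail := hrot.mem_iff.mp h
      have : w ∈ c.support := by
        rw [Walk.support_eq_cons]
        exact List.mem_cons.mpr (Or.inr this)
      exact hmax' w this
  cases c' with
  | nil => exact Walk.IsCycle.not_of_nil hc'
  | cons h q =>
    rename_i b
    rw [Walk.cons_isCycle_iff] at hc'
    obtain ⟨hq, hedge⟩ := hc'
    cases hqr : q.reverse with
    | nil =>
      exact (parentGraph root parent).irrefl h
    | cons h' q'' =>
      rename_i y
      have hyedge : s(u, y) ∈ q.edges := by
        have he := Walk.edges_reverse q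
        rw [hqr] at he
        have : s(u, y) ∈ q.edges.reverse := by
          rw [← he]
          exact List.mem_cons_self
        exact List.mem_reverse.mp this
      have hyb : y ≠ b := by
        intro hh
        rw [hh] at hyedge
        exact hedge hyedge
      have hbsup : b ∈ (Walk.cons h q).support := by
        rw [Walk.support_cons]
        exact List.mem_cons.mpr (Or.inr q.start_mem_support)
      have hysup : y ∈ (Walk.cons h q).support := by
        have h1 : y ∈ q.reverse.support := by
          rw [hqr, Walk.support_cons]
          exact List.mem_cons.mpr (Or.inr q''.start_mem_support)
        rw [Walk.support_reverse, List.mem_reverse] at h1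
        rw [Walk.support_cons]
        exact List.mem_cons.mpr (Or.inr h1)
      have hb' : b = parent u := parentGraph_key root parent rank hrank h (hsup b hbsup)
      have hy' : y = parent u := parentGraph_key root parent rank hrank h' (hsup y hysup)
      exact hyb (hy'.trans hb'.symm)

lemma parentGraph_isTree [Nonempty V] : (parentGraph root parent).IsTree := by
  constructor
  · exact ⟨fun a b => (parentGraph_reach root parent rank hrank a).trans
      (parentGraph_reach root parent rank hrank b).symm⟩
  · exact parentGraph_acyclic root parent rank hrank

end Generic


set_option maxRecDepth 4000
-- block tables
def pred9 : Fin 9 → Fin 9 := ![0, 0, 1, 0, 3, 0, 5, 6, 7]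
def dep9 : Fin 9 → ℕ := ![0, 1, 2, 1, 2, 1, 2, 3, 4]
def nbr9 : Fin 9 → Finset (Fin 9) :=
  ![{0,1,3,5}, {0,1,2}, {1,2}, {0,3,4}, {3,4}, {0,5,6}, {5,6,7}, {6,7,8}, {7,8}]
def pack9 : Finset (Fin 9) := {2, 4, 5, 8}

def adj9 (v w : Fin 9) : Prop := (v ≠ 0 ∧ w = pred9 v) ∨ (w ≠ 0 ∧ v = pred9 w)

instance : DecidableRel adj9 := fun v w => by unfold adj9; infer_instance

def blockSets : Finset (Finset (Fin 9)) :=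
  { {1,3,5,7}, {1,3,5,8}, {1,3,6,7}, {1,3,6,8},
    {1,4,5,7}, {1,4,5,8}, {1,4,6,7}, {1,4,6,8},
    {2,3,5,7}, {2,3,5,8}, {2,3,6,7}, {2,3,6,8},
    {2,4,5,7}, {2,4,5,8},
    {0,1,3,7}, {0,1,4,7}, {0,2,3,7}, {0,2,4,7} }

lemma blockSets_card : blockSets.card = 18 := by decide
lemma blockSets_dom : ∀ s ∈ blockSets, ∀ v : Fin 9, v ∈ s ∨ ∃ w ∈ s, adj9 v w := by decide
lemma blockSets_four : ∀ s ∈ blockSets, s.card = 4 := by decide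

lemma d1 : ∀ t : Fin 9, t ∈ nbr9 t := by decide
lemma d2 : ∀ t : Fin 9, t ≠ 0 → pred9 t ∈ nbr9 t := by decide
lemma d3 : ∀ i t : Fin 9, i ≠ 0 → pred9 i = t → i ∈ nbr9 t := by decide
lemma d4 : ∀ w : Fin 9, w ≠ 0 → pred9 w ≠ w := by decide
lemma d5 : ∀ t ∈ pack9, ∀ t' ∈ pack9, t ≠ t' →
    ∀ x : Fin 9, x ∈ nbr9 t → x ∈ nbr9 t' → False := by decide
lemma d6 : ∀ t ∈ pack9, t ≠ (0 : Fin 9) := by decide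
lemma d7 : pack9.card = 4 := by decide
lemma d8 : ∀ i : Fin 9, i ≠ 0 → dep9 (pred9 i) < dep9 i := by decide
lemma c0_mem : ({1,3,6,7} : Finset (Fin 9)) ∈ blockSets := by decide

section Chain

variable (r : ℕ) [NeZero r]

def par : Fin r × Fin 9 → Fin r × Fin 9 := fun p =>
  if p.2 = 0 then (⟨p.1.1 - 1, by omega⟩, 0) else (p.1, pred9 p.2)

def rnk : Fin r × Fin 9 → ℕ := fun p => 9 * p.1.1 + dep9 p.2

def rootr : Fin r × Fin 9 := (⟨0, Nat.pos_of_ne_zero (NeZero.ne r)⟩, 0)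

def T : SimpleGraph (Fin r × Fin 9) := parentGraph (rootr r) (par r)

lemma hrank_r : ∀ v, v ≠ rootr r → rnk r (par r v) < rnk r v := by
  rintro ⟨j, i⟩ hv
  by_cases hi : i = 0
  · subst hi
    have hj : j.1 ≠ 0 := by
      intro h
      apply hv
      unfold rootr
      ext
      · exact h
      · rfl
    have : par r (j, 0) = (⟨j.1 - 1, by omega⟩, 0) := by unfold par; simp
    rw [this]
    unfold rnk
    simp only
    omega
  · have : par r (j, i) = (j, pred9 i) := by unfold par; simp [hi]
    rw [this]
    unfold rnk
    simp only
    have := d8 i hi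
    omega

lemma T_isTree : (T r).IsTree :=
  parentGraph_isTree (rootr r) (par r) (rnk r) (hrank_r r)

lemma T_adj {u v : Fin r × Fin 9} :
    (T r).Adj u v ↔ u ≠ v ∧ ((v ≠ rootr r ∧ u = par r v) ∨ (u ≠ rootr r ∧ v = par r u)) :=
  parentGraph_adj _ _

lemma snd_ne_zero_ne_root {p : Fin r × Fin 9} (h : p.2 ≠ 0) : p ≠ rootr r := by
  intro hh
  rw [hh] at h
  exact h rfl

/-- closed-neighborhood characterization for non-center vertices -/
lemma mem_closed {v w : Fin r × Fin 9} (hv : v.2 ≠ 0)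
    (h : w = v ∨ (T r).Adj w v) : w.1 = v.1 ∧ w.2 ∈ nbr9 v.2 := by
  rcases h with rfl | h
  · exact ⟨rfl, d1 _⟩
  · rw [T_adj] at h
    rcases h.2 with ⟨h1, h2⟩ | ⟨h1, h2⟩
    · have : par r v = (v.1, pred9 v.2) := by unfold par; simp [hv]
      rw [this] at h2
      rw [h2]
      exact ⟨rfl, d2 _ hv⟩
    · by_cases hw : w.2 = 0
      · have : par r w = (⟨w.1.1 - 1, by omega⟩, 0) := by unfold par; simp [hw]
        rw [this] at h2
        exact absurd (congrArg Prod.snd h2) hv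
      · have : par r w = (w.1, pred9 w.2) := by unfold par; simp [hw]
        rw [this] at h2
        have h3 : v.1 = w.1 := by rw [h2]
        have h4 : v.2 = pred9 w.2 := by rw [h2]
        exact ⟨h3.symm, d3 _ _ hw h4.symm⟩

lemma adj_of_adj9 {v w : Fin 9} (j : Fin r) (h : adj9 v w) : (T r).Adj (j, v) (j, w) := by
  have main : ∀ a b : Fin 9, b ≠ 0 → a = pred9 b → (T r).Adj (j, a) (j, b) := by
    intro a b hb hab
    rw [T_adj]
    refine ⟨?_, Or.inl ⟨snd_ne_zero_ne_root r hb, ?_⟩⟩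
    · intro hh
      have h5 : a = b := congrArg Prod.snd hh
      rw [hab] at h5
      exact d4 b hb h5
    · have : par r (j, b) = (j, pred9 b) := by unfold par; simp [hb]
      rw [this, hab]
  rcases h with ⟨h1, h2⟩ | ⟨h1, h2⟩
  · exact ((T r).adj_symm (main w v h1 h2))
  · exact main v w h1 h2

end Chain

section Dom

variable (r : ℕ) [NeZero r]

def emb (j : Fin r) : Fin 9 ↪ Fin r × Fin 9 :=
  ⟨fun i => (j, i), fun a b hab => by injection hab⟩

def Df (f : Fin r → Finset (Fin 9)) : Finset (Fin r × Fin 9) :=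
  Finset.univ.biUnion (fun j => (f j).map (emb r j))

lemma mem_Df {f : Fin r → Finset (Fin 9)} {j : Fin r} {i : Fin 9} :
    (j, i) ∈ Df r f ↔ i ∈ f j := by
  simp only [Df, Finset.mem_biUnion, Finset.mem_map, Finset.mem_univ, true_and, emb,
    Function.Embedding.coeFn_mk]
  constructor
  · rintro ⟨j', i', hi', heq⟩
    obtain ⟨h1, h2⟩ := Prod.mk.injEq _ _ _ _ ▸ heq
    exact h1 ▸ h2 ▸ hi'
  · intro hi
    exact ⟨j, i, hi, rfl⟩

lemma card_Df {f : Fin r → Finset (Fin 9)} (hf : ∀ j, f j ∈ blockSets) :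
    (Df r f).card = 4 * r := by
  rw [Df, Finset.card_biUnion]
  · have : ∀ j ∈ Finset.univ, ((f j).map (emb r j)).card = 4 := by
      intro j _
      rw [Finset.card_map]
      exact blockSets_four _ (hf j)
    rw [Finset.sum_congr rfl this, Finset.sum_const, Finset.card_univ, Fintype.card_fin,
      smul_eq_mul, mul_comm]
  · intro a _ b _ hab
    rw [Function.onFun, Finset.disjoint_iff_ne]
    rintro x hx y hy rfl
    rw [Finset.mem_map] at hx hy
    obtain ⟨i1, _, h1⟩ := hx
    obtain ⟨i2, _, h2⟩ := hy
    apply hab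
    have := h1.trans h2.symm
    exact congrArg Prod.fst this

lemma dom_Df {f : Fin r → Finset (Fin 9)} (hf : ∀ j, f j ∈ blockSets) :
    IsDominatingSet (T r) (Df r f) := by
  rintro ⟨j, i⟩
  rcases blockSets_dom (f j) (hf j) i with h | ⟨w, hw, hadj⟩
  · exact Or.inl ((mem_Df r).mpr h)
  · exact Or.inr ⟨(j, w), (mem_Df r).mpr hw, adj_of_adj9 r j hadj⟩

lemma dom_card_lb (D : Finset (Fin r × Fin 9)) (hD : IsDominatingSet (T r) D) :
    4 * r ≤ D.card := by
  classical
  set P : Finset (Fin r × Fin 9) := Finset.univ ×ˢ pack9 with hP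
  have hPcard : P.card = r * 4 := by
    rw [hP, Finset.card_product, Finset.card_univ, Fintype.card_fin, d7]
  have hex : ∀ v : Fin r × Fin 9, ∃ w, w ∈ D ∧ (w = v ∨ (T r).Adj w v) := by
    intro v
    rcases hD v with h | ⟨w, hw, hadj⟩
    · exact ⟨v, h, Or.inl rfl⟩
    · exact ⟨w, hw, Or.inr hadj.symm⟩
  set g : (Fin r × Fin 9) → (Fin r × Fin 9) := fun v => (hex v).choose with hg
  have hgspec : ∀ v, g v ∈ D ∧ (g v = v ∨ (T r).Adj (g v) v) := fun v => (hex v).choose_spec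
  have hmaps : ∀ v ∈ P, g v ∈ D := fun v _ => (hgspec v).1
  have hinj : Set.InjOn g P := by
    intro v hv v' hv' heq
    rw [hP, Finset.coe_product] at hv hv'
    have hv2 : v.2 ∈ pack9 := by simpa using hv.2
    have hv2' : v'.2 ∈ pack9 := by simpa using hv'.2
    have h1 := mem_closed r (d6 _ hv2) (hgspec v).2
    have h2 := mem_closed r (d6 _ hv2') (heq ▸ (hgspec v').2)
    have hfst : v.1 = v'.1 := h1.1.symm.trans h2.1
    have hsnd : v.2 = v'.2 := by
      by_contra hne
      exact d5 _ hv2 _ hv2' hne _ h1.2 h2.2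
    exact Prod.ext hfst hsnd
  calc 4 * r = P.card := by rw [hPcard, mul_comm]
    _ ≤ D.card := Finset.card_le_card_of_injOn g hmaps hinj

lemma domNum_T : dominationNumber (T r) = 4 * r := by
  have hmem : 4 * r ∈ {n | ∃ D : Finset (Fin r × Fin 9),
      IsDominatingSet (T r) D ∧ D.card = n} :=
    ⟨Df r (fun _ => {1,3,6,7}), dom_Df r (fun _ => c0_mem), card_Df r (fun _ => c0_mem)⟩
  refine le_antisymm (Nat.sInf_le hmem) ?_
  have hne := Nat.sInf_mem (Set.nonempty_of_mem hmem)
  obtain ⟨D, hD, hcard⟩ := hne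
  rw [dominationNumber, ← hcard]
  exact dom_card_lb r D hD

lemma count_lb : 18 ^ r ≤ numMinDomSets (T r) := by
  classical
  set Φ : (Fin r → {s // s ∈ blockSets}) → Finset (Fin r × Fin 9) :=
    fun f => Df r (fun j => (f j).1) with hΦ
  have hinj : Function.Injective Φ := by
    intro f g hfg
    funext j
    apply Subtype.ext
    apply Finset.ext
    intro i
    constructor
    · intro hi
      exact (mem_Df r).mp ((Finset.ext_iff.mp hfg (j, i)).mp ((mem_Df r).mpr hi))
    · intro hi
      exact (mem_Df r).mp ((Finset.ext_iff.mp hfg (j, i)).mpr ((mem_Df r).mpr hi))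
  have hsub : Set.range Φ ⊆ {D : Finset (Fin r × Fin 9) |
      IsDominatingSet (T r) D ∧ D.card = dominationNumber (T r)} := by
    rintro _ ⟨f, rfl⟩
    exact ⟨dom_Df r (fun j => (f j).2), by rw [card_Df r (fun j => (f j).2), domNum_T]⟩
  have h1 : (Set.range Φ).ncard = 18 ^ r := by
    rw [← Set.image_univ, Set.ncard_image_of_injective _ hinj, Set.ncard_univ,
      Nat.card_eq_fintype_card, Fintype.card_fun, Fintype.card_coe, blockSets_card,
      Fintype.card_fin]
  rw [numMinDomSets, ← h1]
  exact Set.ncard_le_ncard hsub (Set.toFinite _)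

end Dom

/-- For every `C > 0` there is a finite tree `T` with domination number `γ ≥ 2` such that
`Γ(T) > C · γ · 2^γ / ln γ`; hence `Γ(T) = O(γ 2^γ / ln γ)` fails for trees. -/
theorem not_bigO_gamma_two_pow (C : ℝ) (hC : 0 < C) :
    ∃ (V : Type) (_ : Fintype V) (G : SimpleGraph V),
      G.IsTree ∧ 2 ≤ dominationNumber G ∧
      C * (dominationNumber G : ℝ) * 2 ^ dominationNumber G /
          Real.log (dominationNumber G) < (numMinDomSets G : ℝ) := by
  set s : ℕ := ⌈512 * C⌉₊ + 2 with hs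
  set r : ℕ := 2 * s with hrdef
  have hr4 : 4 ≤ r := by omega
  haveI : NeZero r := ⟨by omega⟩
  refine ⟨Fin r × Fin 9, inferInstance, T r, T_isTree r, ?_, ?_⟩
  · rw [domNum_T]; omega
  · rw [domNum_T]
    -- numeric facts
    have hs512 : 512 * C < (s : ℝ) := by
      have h1 := Nat.le_ceil (512 * C)
      have h2 : (⌈512 * C⌉₊ : ℝ) < (s : ℝ) := by
        rw [hs]; push_cast; linarith
      linarith
    have hspos : (0 : ℝ) < s := lt_trans (by positivity) hs512
    have hrval : (r : ℝ) = 2 * s := by rw [hrdef]; push_cast; ring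
    have hbern : 1 + (s : ℝ) * (1 / 8) ≤ (9 / 8 : ℝ) ^ s := by
      have h := one_add_mul_le_pow (a := (1 / 8 : ℝ)) (by norm_num) s
      calc 1 + (s : ℝ) * (1/8) = 1 + (s : ℝ) * (1/8) := rfl
        _ ≤ (1 + 1/8 : ℝ) ^ s := h
        _ = (9/8 : ℝ) ^ s := by norm_num
    have hkey : C * (4 * (r : ℝ)) < (9 / 8 : ℝ) ^ r := by
      have h2 : (9/8 : ℝ) ^ r = ((9/8 : ℝ) ^ s) ^ 2 := by
        rw [hrdef, mul_comm 2 s, pow_mul]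
      have h3 : ((1 : ℝ) + s * (1/8)) ^ 2 ≤ ((9/8 : ℝ) ^ s) ^ 2 :=
        pow_le_pow_left₀ (by positivity) hbern 2
      have h4 : C * (4 * (r : ℝ)) = 8 * C * s := by rw [hrval]; ring
      have h5 : 8 * C * (s : ℝ) < ((1 : ℝ) + s * (1/8)) ^ 2 := by nlinarith
      rw [h4, h2]
      exact lt_of_lt_of_le h5 h3
    have h16 : (2 : ℝ) ^ (4 * r) = 16 ^ r := by rw [pow_mul]; norm_num
    have h18 : (18 : ℝ) ^ r = (9/8 : ℝ) ^ r * 16 ^ r := by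
      rw [← mul_pow]; norm_num
    have hlog : 1 < Real.log ((4 * r : ℕ) : ℝ) := by
      rw [Real.lt_log_iff_exp_lt (by positivity)]
      have h1 : Real.exp 1 < 2.7182818286 := Real.exp_one_lt_d9
      have h2 : (2.7182818286 : ℝ) < ((4 * r : ℕ) : ℝ) := by
        have : (16 : ℝ) ≤ ((4 * r : ℕ) : ℝ) := by
          have : (16 : ℕ) ≤ 4 * r := by omega
          exact_mod_cast this
        linarith
      linarith
    have hcount : ((18 : ℝ)) ^ r ≤ (numMinDomSets (T r) : ℝ) := by
      have := count_lb r
      calc (18 : ℝ) ^ r = ((18 ^ r : ℕ) : ℝ) := by push_cast; ring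
        _ ≤ (numMinDomSets (T r) : ℝ) := by exact_mod_cast this
    have hnum : (0 : ℝ) ≤ C * ((4 * r : ℕ) : ℝ) * 2 ^ (4 * r) := by positivity
    calc C * ((4 * r : ℕ) : ℝ) * 2 ^ (4 * r) / Real.log ((4 * r : ℕ) : ℝ)
        ≤ C * ((4 * r : ℕ) : ℝ) * 2 ^ (4 * r) := div_le_self hnum (le_of_lt hlog)
      _ = C * (4 * (r : ℝ)) * 16 ^ r := by rw [h16]; push_cast; ring
      _ < (9/8 : ℝ) ^ r * 16 ^ r := by
          exact mul_lt_mul_of_pos_right hkey (by positivity)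
      _ = (18 : ℝ) ^ r := h18.symm
      _ ≤ (numMinDomSets (T r) : ℝ) := hcount
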